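/- Let H be a finite graph with maximum degree Δ and at least one vertex, let λ ≥ 0 and ζ ∈ [0,1]. Then for every pair of subsets y, z ⊆ V(H) there exists a coupling π of the random sets P_{H,λ,ζ} y and P_{H,λ,ζ} z such that the expectation under π of the Hamming distance between them is at most (1 − (1 − Δ·λ·ζ)/|V(H)|)·dist(y,z), where dist denotes Hamming distance (size of symmetric difference) of subsets of V(H). -/

import Mathlib

open Filter
open scoped BigOperators symmDiff Classical

noncomputable section

/-- Number of edges of a labeled simple graph on `Fin n`. -/
def edgeCount {n : ℕ} (G : SimpleGraph (Fin n)) : ℕ := Nat.card G.edgeSet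

/-- Number of triangles of a labeled simple graph on `Fin n`. -/
def triCount {n : ℕ} (G : SimpleGraph (Fin n)) : ℕ :=
  Nat.card {s : Finset (Fin n) // G.IsNClique 3 s}

/-- Probability of the event `A` under the Erdős–Rényi random graph `G(n,p)`. -/
def erProb (n : ℕ) (p : ℝ) (A : Set (SimpleGraph (Fin n))) : ℝ :=
  ∑ G : SimpleGraph (Fin n),
    if G ∈ A then p ^ edgeCount G * (1 - p) ^ (n.choose 2 - edgeCount G) else 0

/-- Conditional probability `P_p(A | B)` for `G(n,p)`. -/
def erCondProb (n : ℕ) (p : ℝ) (A B : Set (SimpleGraph (Fin n))) : ℝ :=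
  erProb n p (A ∩ B) / erProb n p B

/-- Probability of the event `A` under the uniform random graph `G(n,m)`. -/
def gnmProb (n m : ℕ) (A : Set (SimpleGraph (Fin n))) : ℝ :=
  (Nat.card {G : SimpleGraph (Fin n) // edgeCount G = m ∧ G ∈ A} : ℝ) /
    ((n.choose 2).choose m : ℝ)

/-- Expected number of triangles of `G(n,m)`. -/
def gnmExpTri (n m : ℕ) : ℝ :=
  (∑ G : SimpleGraph (Fin n), if edgeCount G = m then (triCount G : ℝ) else 0) /
    ((n.choose 2).choose m : ℝ)

/-- Gibbs weight `λ^{|G|} (1-ζ)^{X(G)}`. -/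
def gibbsWeight {n : ℕ} (lam zeta : ℝ) (G : SimpleGraph (Fin n)) : ℝ :=
  lam ^ edgeCount G * (1 - zeta) ^ triCount G

/-- The partition function `Z(λ,ζ)`. -/
def Zfun (n : ℕ) (lam zeta : ℝ) : ℝ := ∑ G : SimpleGraph (Fin n), gibbsWeight lam zeta G

/-- Probability of the event `A` under the Gibbs measure `μ_{λ,ζ}`. -/
def gibbsProb (n : ℕ) (lam zeta : ℝ) (A : Set (SimpleGraph (Fin n))) : ℝ :=
  (∑ G : SimpleGraph (Fin n), if G ∈ A then gibbsWeight lam zeta G else 0) / Zfun n lam zeta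

/-- Expectation of `f` under the Gibbs measure `μ_{λ,ζ}`. -/
def gibbsExp (n : ℕ) (lam zeta : ℝ) (f : SimpleGraph (Fin n) → ℝ) : ℝ :=
  (∑ G : SimpleGraph (Fin n), f G * gibbsWeight lam zeta G) / Zfun n lam zeta

/-- Number of edges of `H` with both endpoints in `S`. -/
def edgesIn {V : Type*} (H : SimpleGraph V) (S : Finset V) : ℕ :=
  Nat.card {e : Sym2 V // e ∈ H.edgeSet ∧ ∀ v ∈ e, v ∈ S}

/-- Weight `λ^{|S|} (1-ζ)^{|E(S)|}` of the measure `ν_{H,λ,ζ}`. -/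
def nuWeight {V : Type*} (H : SimpleGraph V) (lam zeta : ℝ) (S : Finset V) : ℝ :=
  lam ^ S.card * (1 - zeta) ^ edgesIn H S

/-- The partition function `Ξ_H(λ,ζ)`. -/
def XiFun {V : Type*} [Fintype V] (H : SimpleGraph V) (lam zeta : ℝ) : ℝ :=
  ∑ S : Finset V, nuWeight H lam zeta S

/-- The probability of `S` under `ν_{H,λ,ζ}`. -/
def nuProb {V : Type*} [Fintype V] (H : SimpleGraph V) (lam zeta : ℝ) (S : Finset V) : ℝ :=
  nuWeight H lam zeta S / XiFun H lam zeta

/-- `W` is the Lambert-W function on `[0,∞)`: for `x ≥ 0`, `W x` is the unique `w ≥ 0`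
with `w·e^w = x`. -/
def IsLambertW (W : ℝ → ℝ) : Prop :=
  ∀ x : ℝ, 0 ≤ x → (0 ≤ W x ∧ W x * Real.exp (W x) = x ∧
    ∀ w : ℝ, 0 ≤ w → w * Real.exp w = x → w = W x)

/-- `η* = (W(2/e)/(2/e))^{3/2}`. -/
def etaStar (W : ℝ → ℝ) : ℝ := (W (2 / Real.exp 1) / (2 / Real.exp 1)) ^ ((3 : ℝ) / 2)

/-- The condition `c < c̄(η)` where `c̄(η) = 1/√(e(1−η/η*))` for `η < η*` and `+∞` otherwise. -/
def LtCbar (W : ℝ → ℝ) (c η : ℝ) : Prop :=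
  η < etaStar W → c < 1 / Real.sqrt (Real.exp 1 * (1 - η / etaStar W))

/-- The left-hand side of the equation defining `ζ(c,η)`, interpreted as `1` at `ζ = 0`. -/
def zetaLHS (W : ℝ → ℝ) (c zeta : ℝ) : ℝ :=
  (1 - zeta) * (if zeta = 0 then 1 else
    (W (2 * zeta * c ^ 2) / (2 * zeta * c ^ 2)) ^ ((3 : ℝ) / 2))



/-- The degree of `u` in the subgraph of `H` induced by `y ∪ {u}`. -/
def inducedDeg {V : Type*} (H : SimpleGraph V) (y : Finset V) (u : V) : ℕ :=
  Nat.card {w : V // w ∈ y ∧ H.Adj u w}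

/-- The transition probability `y → z` of the single-step Glauber dynamics `P_{H,λ,ζ}` on
subsets of `V(H)`: a uniformly random vertex is resampled. -/
def vertexGlauberStep {V : Type*} [Fintype V] [DecidableEq V] (H : SimpleGraph V)
    (lam zeta : ℝ) (y z : Finset V) : ℝ :=
  (1 / (Fintype.card V : ℝ)) *
    ∑ u : V,
      ((if z = insert u y then
          lam * (1 - zeta) ^ inducedDeg H y u / (1 + lam * (1 - zeta) ^ inducedDeg H y u)
        else 0) +
       (if z = y.erase u then 1 / (1 + lam * (1 - zeta) ^ inducedDeg H y u) else 0))

/-- Maximum degree of a finite graph. -/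
def maxDegV {V : Type*} [Fintype V] (H : SimpleGraph V) : ℕ :=
  Finset.univ.sup (fun v => Nat.card (H.neighborSet v))


private noncomputable def pP (lam t : ℝ) (k : ℕ) : ℝ := lam * t ^ k / (1 + lam * t ^ k)

private lemma pP_denom_pos {lam t : ℝ} (hlam : 0 ≤ lam) (ht : 0 ≤ t) (k : ℕ) :
    0 < 1 + lam * t ^ k := by positivity

private lemma pP_nonneg {lam t : ℝ} (hlam : 0 ≤ lam) (ht : 0 ≤ t) (k : ℕ) :
    0 ≤ pP lam t k := by
  have := pP_denom_pos hlam ht k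
  exact div_nonneg (by positivity) this.le

private lemma pP_le_one {lam t : ℝ} (hlam : 0 ≤ lam) (ht : 0 ≤ t) (k : ℕ) :
    pP lam t k ≤ 1 := by
  have h := pP_denom_pos hlam ht k
  rw [pP, div_le_one h]; linarith

private lemma one_sub_pP {lam t : ℝ} (hlam : 0 ≤ lam) (ht : 0 ≤ t) (k : ℕ) :
    1 - pP lam t k = 1 / (1 + lam * t ^ k) := by
  have h := pP_denom_pos hlam ht k
  rw [pP]; field_simp; ring

private lemma pow_sub_pow_le {t : ℝ} (h0 : 0 ≤ t) (h1 : t ≤ 1) {k m : ℕ} (hkm : k ≤ m) :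
    t ^ k - t ^ m ≤ ((m : ℝ) - k) * (1 - t) := by
  have hb : 1 + ((m - k : ℕ) : ℝ) * (t - 1) ≤ t ^ (m - k) := by
    have := one_add_mul_le_pow (a := t - 1) (by linarith) (m - k)
    simpa using this
  have h2 : t ^ k - t ^ m = t ^ k * (1 - t ^ (m - k)) := by
    rw [mul_sub, mul_one, ← pow_add]
    congr 2
    omega
  have h3 : t ^ k ≤ 1 := pow_le_one₀ h0 h1
  have h4 : 0 ≤ 1 - t ^ (m - k) := by
    have := pow_le_one₀ h0 h1 (n := m - k); linarith
  have h5 : t ^ k * (1 - t ^ (m - k)) ≤ 1 - t ^ (m - k) := by nlinarith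
  have h6 : 1 - t ^ (m - k) ≤ ((m : ℝ) - k) * (1 - t) := by
    have hc : ((m - k : ℕ) : ℝ) = (m : ℝ) - k := by
      push_cast [Nat.cast_sub hkm]; ring
    rw [← hc]; nlinarith [hb]
  linarith

private lemma pP_abs_diff_le {lam t : ℝ} (hlam : 0 ≤ lam) (h0 : 0 ≤ t) (h1 : t ≤ 1)
    (k m : ℕ) : |pP lam t k - pP lam t m| ≤ lam * (1 - t) * |(k : ℝ) - m| := by
  -- helper: for 0 ≤ a ≤ b, 0 ≤ b/(1+b) - a/(1+a) ≤ b - a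
  have key : ∀ p q : ℕ, p ≤ q → pP lam t q ≤ pP lam t p ∧
      pP lam t p - pP lam t q ≤ lam * (1 - t) * ((q : ℝ) - p) := by
    intro p q hpq
    set a := lam * t ^ q with ha
    set b := lam * t ^ p with hb
    have ha0 : 0 ≤ a := by positivity
    have hab : a ≤ b := by
      exact mul_le_mul_of_nonneg_left (pow_le_pow_of_le_one h0 h1 hpq) hlam
    have hda := pP_denom_pos hlam h0 q
    have hdb := pP_denom_pos hlam h0 p
    have heq : pP lam t p - pP lam t q = (b - a) / ((1 + a) * (1 + b)) := by
      have hA : (1 + a) ≠ 0 := by rw [ha]; linarith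
      have hB : (1 + b) ≠ 0 := by rw [hb]; linarith
      rw [pP, pP, ← ha, ← hb, div_sub_div _ _ hB hA]; ring
    have hden1 : 1 ≤ (1 + a) * (1 + b) := by nlinarith
    have hnn : 0 ≤ (b - a) / ((1 + a) * (1 + b)) :=
      div_nonneg (by linarith) (by linarith)
    constructor
    · linarith [heq ▸ hnn]
    · rw [heq]
      have h2 : (b - a) / ((1 + a) * (1 + b)) ≤ b - a :=
        div_le_self (by linarith) hden1
      have h3 : b - a = lam * (t ^ p - t ^ q) := by rw [ha, hb]; ring
      have h4 : t ^ p - t ^ q ≤ ((q : ℝ) - p) * (1 - t) := pow_sub_pow_le h0 h1 hpq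
      have h5 : lam * (t ^ p - t ^ q) ≤ lam * (((q : ℝ) - p) * (1 - t)) :=
        mul_le_mul_of_nonneg_left h4 hlam
      nlinarith
  rcases le_total k m with hkm | hmk
  · have := key k m hkm
    rw [abs_of_nonneg (by linarith [this.1]), abs_of_nonpos (by
      have : (k:ℝ) ≤ m := by exact_mod_cast hkm
      linarith)]
    have : lam * (1 - t) * ((m : ℝ) - k) = lam * (1 - t) * -((k:ℝ) - m) := by ring
    linarith [this ▸ key k m hkm |>.2]
  · have := key m k hmk
    rw [abs_sub_comm] at *
    rw [abs_of_nonneg (by linarith [this.1]), abs_of_nonneg (by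
      have : (m:ℝ) ≤ k := by exact_mod_cast hmk
      linarith)]
    exact this.2

/-- the per-vertex coupling kernel -/
private noncomputable def coupF {V : Type} [DecidableEq V] (py pz : V → ℝ)
    (y z : Finset V) (u : V) (a b : Finset V) : ℝ :=
  (if a = insert u y then
     (if b = insert u z then min (py u) (pz u) else 0) +
     (if b = z.erase u then py u - min (py u) (pz u) else 0)
   else 0) +
  (if a = y.erase u then
     (if b = insert u z then pz u - min (py u) (pz u) else 0) +
     (if b = z.erase u then 1 - max (py u) (pz u) else 0)
   else 0)

variable {V : Type} [Fintype V] [DecidableEq V]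

private lemma coupF_nonneg {py pz : V → ℝ} {y z : Finset V} {u : V} {a b : Finset V}
    (h1 : 0 ≤ py u) (h2 : py u ≤ 1) (h3 : 0 ≤ pz u) (h4 : pz u ≤ 1) :
    0 ≤ coupF py pz y z u a b := by
  have hm0 : 0 ≤ min (py u) (pz u) := le_min h1 h3
  have hm1 : min (py u) (pz u) ≤ py u := min_le_left _ _
  have hm2 : min (py u) (pz u) ≤ pz u := min_le_right _ _
  have hM : max (py u) (pz u) ≤ 1 := max_le h2 h4
  unfold coupF
  split_ifs <;> linarith

private lemma coupF_sumb (py pz : V → ℝ) (y z : Finset V) (u : V) (a : Finset V) :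
    ∑ b : Finset V, coupF py pz y z u a b =
      (if a = insert u y then py u else 0) + (if a = y.erase u then 1 - py u else 0) := by
  have hmm := min_add_max (py u) (pz u)
  have hne : insert u y ≠ y.erase u := by
    intro hcon
    have h2 := Finset.notMem_erase u y
    rw [← hcon] at h2
    simp at h2
  by_cases h : a = insert u y <;> by_cases h' : a = y.erase u <;>
    simp [coupF, h, h', hne, Ne.symm hne, Finset.sum_add_distrib, Finset.sum_ite_eq'] <;> linarith

private lemma coupF_suma (py pz : V → ℝ) (y z : Finset V) (u : V) (b : Finset V) :
    ∑ a : Finset V, coupF py pz y z u a b =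
      (if b = insert u z then pz u else 0) + (if b = z.erase u then 1 - pz u else 0) := by
  have hmm := min_add_max (py u) (pz u)
  have hne : insert u z ≠ z.erase u := by
    intro hcon
    have h2 := Finset.notMem_erase u z
    rw [← hcon] at h2
    simp at h2
  by_cases h : b = insert u z <;> by_cases h' : b = z.erase u <;>
    simp [coupF, h, h', hne, Ne.symm hne, Finset.sum_add_distrib, Finset.sum_ite_eq'] <;> linarith

private lemma symm_ii (u : V) (y z : Finset V) :
    (insert u y) ∆ (insert u z) = (y ∆ z).erase u := by
  ext v; by_cases h : v = u <;> simp [Finset.mem_symmDiff, h] <;> tauto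

private lemma symm_ee (u : V) (y z : Finset V) :
    (y.erase u) ∆ (z.erase u) = (y ∆ z).erase u := by
  ext v; by_cases h : v = u <;> simp [Finset.mem_symmDiff, h] <;> tauto

private lemma symm_ie (u : V) (y z : Finset V) :
    (insert u y) ∆ (z.erase u) = insert u ((y ∆ z).erase u) := by
  ext v; by_cases h : v = u <;> simp [Finset.mem_symmDiff, h] <;> tauto

private lemma symm_ei (u : V) (y z : Finset V) :
    (y.erase u) ∆ (insert u z) = insert u ((y ∆ z).erase u) := by
  ext v; by_cases h : v = u <;> simp [Finset.mem_symmDiff, h] <;> tauto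

private lemma coupF_expect (py pz : V → ℝ) (y z : Finset V) (u : V) :
    ∑ a : Finset V, ∑ b : Finset V, coupF py pz y z u a b * ((a ∆ b).card : ℝ)
      = (((y ∆ z).erase u).card : ℝ) + |py u - pz u| := by
  have hmm := min_add_max (py u) (pz u)
  have habs : |py u - pz u| = max (py u) (pz u) - min (py u) (pz u) := by
    rw [max_sub_min_eq_abs, abs_sub_comm]
  have hcard : (insert u ((y ∆ z).erase u)).card = ((y ∆ z).erase u).card + 1 :=
    Finset.card_insert_of_notMem (Finset.notMem_erase u _)
  have hne : insert u y ≠ y.erase u := by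
    intro hcon
    have h2 := Finset.notMem_erase u y
    rw [← hcon] at h2
    simp at h2
  have hnz : insert u z ≠ z.erase u := by
    intro hcon
    have h2 := Finset.notMem_erase u z
    rw [← hcon] at h2
    simp at h2
  set m := min (py u) (pz u) with hm
  set M := max (py u) (pz u) with hM
  set e : ℝ := (((y ∆ z).erase u).card : ℝ) with he
  calc ∑ a : Finset V, ∑ b : Finset V, coupF py pz y z u a b * ((a ∆ b).card : ℝ)
      = ∑ a : Finset V, ∑ b : Finset V,
          ((if a = insert u y then (1:ℝ) else 0) *
            ((if b = insert u z then m * e else 0) +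
             (if b = z.erase u then (py u - m) * (e + 1) else 0)) +
           (if a = y.erase u then (1:ℝ) else 0) *
            ((if b = insert u z then (pz u - m) * (e + 1) else 0) +
             (if b = z.erase u then (1 - M) * e else 0))) := by
        refine Finset.sum_congr rfl fun a _ => Finset.sum_congr rfl fun b _ => ?_
        rcases eq_or_ne a (insert u y) with h1 | h1 <;>
          rcases eq_or_ne a (y.erase u) with h2 | h2 <;>
          rcases eq_or_ne b (insert u z) with h3 | h3 <;>
          rcases eq_or_ne b (z.erase u) with h4 | h4 <;>
          first
          | (exact absurd (h1.symm.trans h2) hne)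
          | (exact absurd (h3.symm.trans h4) hnz)
          | (simp only [coupF, h1, h2, h3, h4, hne, hnz, Ne.symm hne, Ne.symm hnz, if_true, if_false, symm_ii, symm_ee,
              symm_ie, symm_ei, hcard]
             push_cast
             ring)
    _ = (m * e + (py u - m) * (e + 1)) + ((pz u - m) * (e + 1) + (1 - M) * e) := by
        simp [Finset.sum_add_distrib, ite_mul, zero_mul, one_mul,
          Finset.sum_ite_eq' Finset.univ]
    _ = e + |py u - pz u| := by rw [habs]; nlinarith [hmm]

private lemma inducedDeg_eq (H : SimpleGraph V) (y : Finset V) (u : V) :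
    Nat.card {w : V // w ∈ y ∧ H.Adj u w} = (y.filter (fun w => H.Adj u w)).card := by
  rw [Nat.card_eq_fintype_card, Fintype.card_subtype]
  congr 1
  ext w; simp


private lemma filter_card_tri (H : SimpleGraph V) (p : V → Prop) (y z : Finset V) :
    (y.filter p).card ≤ (z.filter p).card + ((y ∆ z).filter p).card := by
  have hsub : y.filter p ⊆ (z.filter p) ∪ ((y ∆ z).filter p) := by
    intro w hw
    simp only [Finset.mem_filter, Finset.mem_union, Finset.mem_symmDiff] at *
    tauto
  exact (Finset.card_le_card hsub).trans (Finset.card_union_le _ _)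


private lemma sum_filter_le (H : SimpleGraph V) (s : Finset V) :
    ∑ u : V, ((s.filter (fun w => H.Adj u w)).card) ≤
      (Finset.univ.sup (fun v => Nat.card (H.neighborSet v))) * s.card := by
  have h1 : ∀ u : V, (s.filter (fun w => H.Adj u w)).card
      = ∑ w ∈ s, if H.Adj u w then 1 else 0 := by
    intro u; rw [Finset.card_filter]
  calc ∑ u : V, ((s.filter (fun w => H.Adj u w)).card)
      = ∑ u : V, ∑ w ∈ s, if H.Adj u w then 1 else 0 := by
        exact Finset.sum_congr rfl fun u _ => h1 u
    _ = ∑ w ∈ s, ∑ u : V, if H.Adj u w then 1 else 0 := Finset.sum_comm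
    _ ≤ ∑ w ∈ s, (Finset.univ.sup (fun v => Nat.card (H.neighborSet v))) := by
        apply Finset.sum_le_sum
        intro w _
        have h2 : ∑ u : V, (if H.Adj u w then 1 else 0)
            = (Finset.univ.filter (fun u => H.Adj u w)).card := by
          rw [Finset.card_filter]
        rw [h2]
        have h3 : Nat.card (H.neighborSet w) = (Finset.univ.filter (fun u => H.Adj u w)).card := by
          rw [Nat.card_eq_fintype_card, ← Set.toFinset_card]
          congr 1
          ext v; simp [H.adj_comm]
        have h4 := Finset.le_sup (f := fun v => Nat.card (H.neighborSet v)) (Finset.mem_univ w)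
        rw [h3] at h4
        exact h4
    _ = (Finset.univ.sup (fun v => Nat.card (H.neighborSet v))) * s.card := by
        rw [Finset.sum_const, smul_eq_mul, mul_comm]


/-- **Lemma (contraction of the vertex Glauber dynamics `P_{H,λ,ζ}`).** -/
theorem glauber_vertex_contraction
    (V : Type) [Fintype V] [DecidableEq V] (hV : Nonempty V)
    (H : SimpleGraph V) (lam zeta : ℝ) (hlam : 0 ≤ lam) (hzeta : zeta ∈ Set.Icc (0 : ℝ) 1) :
    ∀ y z : Finset V,
      ∃ π : Finset V × Finset V → ℝ,
        (∀ x, 0 ≤ π x) ∧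
        (∀ a : Finset V, ∑ b : Finset V, π (a, b) = vertexGlauberStep H lam zeta y a) ∧
        (∀ b : Finset V, ∑ a : Finset V, π (a, b) = vertexGlauberStep H lam zeta z b) ∧
        (∑ a : Finset V, ∑ b : Finset V, π (a, b) * ((a ∆ b).card : ℝ)) ≤
          (1 - (1 - (maxDegV H : ℝ) * lam * zeta) / (Fintype.card V : ℝ)) *
            ((y ∆ z).card : ℝ) := by
  intro y z
  obtain ⟨hz0, hz1⟩ := hzeta
  have hn0 : 0 < (Fintype.card V : ℝ) := by
    have := Fintype.card_pos (α := V)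
    exact_mod_cast this
  have ht0 : (0:ℝ) ≤ 1 - zeta := by linarith
  have ht1 : (1:ℝ) - zeta ≤ 1 := by linarith
  set py : V → ℝ := fun u => pP lam (1 - zeta) (inducedDeg H y u) with hpy
  set pz : V → ℝ := fun u => pP lam (1 - zeta) (inducedDeg H z u) with hpz
  refine ⟨fun x => (1 / (Fintype.card V : ℝ)) *
      ∑ u : V, coupF py pz y z u x.1 x.2, ?_, ?_, ?_, ?_⟩
  · -- nonnegativity
    intro x
    refine mul_nonneg (by positivity) (Finset.sum_nonneg fun u _ => ?_)
    exact coupF_nonneg (pP_nonneg hlam ht0 _) (pP_le_one hlam ht0 _)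
      (pP_nonneg hlam ht0 _) (pP_le_one hlam ht0 _)
  · -- first marginal
    intro a
    calc ∑ b : Finset V, (1 / (Fintype.card V : ℝ)) * ∑ u : V, coupF py pz y z u a b
        = (1 / (Fintype.card V : ℝ)) * ∑ u : V, ∑ b : Finset V, coupF py pz y z u a b := by
          rw [← Finset.mul_sum, Finset.sum_comm]
      _ = vertexGlauberStep H lam zeta y a := by
          rw [vertexGlauberStep]
          congr 1
          refine Finset.sum_congr rfl fun u _ => ?_
          rw [coupF_sumb]
          have e2 : (1:ℝ) - py u = 1 / (1 + lam * (1 - zeta) ^ inducedDeg H y u) :=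
            one_sub_pP hlam ht0 _
          rw [e2]
          simp only [hpy, pP]
  · -- second marginal
    intro b
    calc ∑ a : Finset V, (1 / (Fintype.card V : ℝ)) * ∑ u : V, coupF py pz y z u a b
        = (1 / (Fintype.card V : ℝ)) * ∑ u : V, ∑ a : Finset V, coupF py pz y z u a b := by
          rw [← Finset.mul_sum, Finset.sum_comm]
      _ = vertexGlauberStep H lam zeta z b := by
          rw [vertexGlauberStep]
          congr 1
          refine Finset.sum_congr rfl fun u _ => ?_
          rw [coupF_suma]
          have e2 : (1:ℝ) - pz u = 1 / (1 + lam * (1 - zeta) ^ inducedDeg H z u) :=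
            one_sub_pP hlam ht0 _
          rw [e2]
          simp only [hpz, pP]
  · -- contraction of expected Hamming distance
    set n : ℝ := (Fintype.card V : ℝ) with hn
    set d : ℝ := ((y ∆ z).card : ℝ) with hd
    set Δ : ℝ := (maxDegV H : ℝ) with hΔ
    set c : V → ℕ := fun u => (((y ∆ z).filter (fun w => H.Adj u w)).card) with hc
    have hstep1 : ∑ a : Finset V, ∑ b : Finset V,
        ((1 / n) * ∑ u : V, coupF py pz y z u a b) * (((a ∆ b).card : ℝ))
        = (1 / n) * ∑ u : V, ((((y ∆ z).erase u).card : ℝ) + |py u - pz u|) := by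
      simp_rw [mul_assoc, ← Finset.mul_sum]
      congr 1
      simp_rw [Finset.sum_mul]
      calc ∑ a : Finset V, ∑ b : Finset V, ∑ u : V, coupF py pz y z u a b * (((a ∆ b).card : ℝ))
          = ∑ a : Finset V, ∑ u : V, ∑ b : Finset V, coupF py pz y z u a b * (((a ∆ b).card : ℝ)) :=
            Finset.sum_congr rfl fun a _ => Finset.sum_comm
        _ = ∑ u : V, ∑ a : Finset V, ∑ b : Finset V, coupF py pz y z u a b * (((a ∆ b).card : ℝ)) :=
            Finset.sum_comm
        _ = ∑ u : V, ((((y ∆ z).erase u).card : ℝ) + |py u - pz u|) :=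
            Finset.sum_congr rfl fun u _ => coupF_expect py pz y z u
    have hsum_e : ∑ u : V, (((y ∆ z).erase u).card : ℝ) = n * d - d := by
      have hper : ∀ u : V, (((y ∆ z).erase u).card : ℝ)
          = d - (if u ∈ y ∆ z then (1:ℝ) else 0) := by
        intro u
        by_cases h : u ∈ y ∆ z
        · rw [if_pos h, Finset.card_erase_of_mem h, hd]
          have h1 : 1 ≤ (y ∆ z).card := Finset.card_pos.mpr ⟨u, h⟩
          push_cast [Nat.cast_sub h1]
          ring
        · rw [if_neg h, Finset.erase_eq_of_notMem h]
          simp [hd]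
      rw [Finset.sum_congr rfl fun u _ => hper u, Finset.sum_sub_distrib,
        Finset.sum_const, Finset.card_univ]
      simp [Finset.sum_ite_mem, hd, hn]
      try ring
    have habs_le : ∀ u : V, |py u - pz u| ≤ lam * zeta * ((c u : ℝ)) := by
      intro u
      have hkey := pP_abs_diff_le hlam ht0 ht1 (inducedDeg H y u) (inducedDeg H z u)
      have hz' : lam * (1 - (1 - zeta)) = lam * zeta := by ring
      rw [hz'] at hkey
      have hyc : inducedDeg H y u = (y.filter (fun w => H.Adj u w)).card := by
        rw [inducedDeg]; exact inducedDeg_eq H y u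
      have hzc : inducedDeg H z u = (z.filter (fun w => H.Adj u w)).card := by
        rw [inducedDeg]; exact inducedDeg_eq H z u
      have h1 : (y.filter (fun w => H.Adj u w)).card
          ≤ (z.filter (fun w => H.Adj u w)).card + c u := filter_card_tri H _ y z
      have h2 : (z.filter (fun w => H.Adj u w)).card
          ≤ (y.filter (fun w => H.Adj u w)).card + c u := by
        have := filter_card_tri H (fun w => H.Adj u w) z y
        rwa [symmDiff_comm] at this
      have hd1 : ((inducedDeg H y u : ℝ)) ≤ (inducedDeg H z u : ℝ) + c u := by
        rw [hyc, hzc]; exact_mod_cast h1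
      have hd2 : ((inducedDeg H z u : ℝ)) ≤ (inducedDeg H y u : ℝ) + c u := by
        rw [hyc, hzc]; exact_mod_cast h2
      have habs : |((inducedDeg H y u : ℝ)) - (inducedDeg H z u : ℝ)| ≤ (c u : ℝ) := by
        rw [abs_sub_le_iff]
        constructor <;> linarith
      calc |py u - pz u| ≤ lam * zeta * |((inducedDeg H y u : ℝ)) - (inducedDeg H z u : ℝ)| :=
            hkey
        _ ≤ lam * zeta * (c u : ℝ) := by
            apply mul_le_mul_of_nonneg_left habs
            positivity
    have hsum_c : ∑ u : V, ((c u : ℝ)) ≤ Δ * d := by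
      have hnat := sum_filter_le H (y ∆ z)
      have : ((∑ u : V, c u : ℕ) : ℝ) ≤ Δ * d := by
        rw [hΔ, hd, maxDegV]
        exact_mod_cast hnat
      push_cast at this
      exact this
    have hsum_abs : ∑ u : V, |py u - pz u| ≤ lam * zeta * (Δ * d) := by
      calc ∑ u : V, |py u - pz u| ≤ ∑ u : V, lam * zeta * ((c u : ℝ)) :=
            Finset.sum_le_sum fun u _ => habs_le u
        _ = lam * zeta * ∑ u : V, ((c u : ℝ)) := by rw [← Finset.mul_sum]
        _ ≤ lam * zeta * (Δ * d) := by
            apply mul_le_mul_of_nonneg_left hsum_c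
            positivity
    rw [hstep1]
    have hT : ∑ u : V, ((((y ∆ z).erase u).card : ℝ) + |py u - pz u|)
        ≤ n * d - d + lam * zeta * (Δ * d) := by
      rw [Finset.sum_add_distrib, hsum_e]
      linarith [hsum_abs]
    have hfin : (1 / n) * (n * d - d + lam * zeta * (Δ * d))
        = (1 - (1 - Δ * lam * zeta) / n) * d := by
      field_simp
      ring
    calc (1 / n) * ∑ u : V, ((((y ∆ z).erase u).card : ℝ) + |py u - pz u|)
        ≤ (1 / n) * (n * d - d + lam * zeta * (Δ * d)) := by
          apply mul_le_mul_of_nonneg_left hT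
          positivity
      _ = (1 - (1 - Δ * lam * zeta) / n) * d := hfin
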